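/- arXiv:2112.03969 — 2 statements merged into one kernel-verified Lean document; each statement's English description precedes it below -/
import Mathlib

section
/- Let P ∈ ℝ^{n×n} be symmetric positive definite and f : ℝ^n → ℝ^m be bounded and measurable. Define x̄(m) = ∫ f(x) N(x; m, P) dx, where N(·; m, P) is the Gaussian density with mean m and covariance P. Then x̄ is differentiable in m and its Jacobian satisfies J_{x̄}(m) = (∫ (f(x) − x̄(m)) (x − m)ᵀ N(x; m, P) dx) P⁻¹, i.e., the Jacobian of the Gaussian-smoothed function equals the SLR gain Ψᵀ P⁻¹ evaluated at m. -/
open MeasureTheory Matrix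

/-- The multivariate Gaussian density `N(x; m, P)`. -/
noncomputable def gaussianDensity {n : ℕ} (m : Fin n → ℝ) (P : Matrix (Fin n) (Fin n) ℝ)
    (x : Fin n → ℝ) : ℝ :=
  (Real.sqrt ((2 * Real.pi) ^ n * P.det))⁻¹ *
    Real.exp (-(1 / 2) * ((x - m) ⬝ᵥ (P⁻¹ *ᵥ (x - m))))

section Auxiliary

variable {n : ℕ}

/-- Dot product with a fixed vector, as a continuous linear map. -/
noncomputable def dotCLM (w : Fin n → ℝ) : (Fin n → ℝ) →L[ℝ] ℝ :=
  LinearMap.toContinuousLinearMap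
    { toFun := fun v => w ⬝ᵥ v
      map_add' := fun a b => dotProduct_add w a b
      map_smul' := fun c a => by simp [dotProduct_smul] }

@[simp] lemma dotCLM_apply (w v : Fin n → ℝ) : dotCLM w v = w ⬝ᵥ v := rfl

lemma dotCLM_norm_le (w : Fin n → ℝ) : ‖dotCLM w‖ ≤ n * ‖w‖ := by
  refine ContinuousLinearMap.opNorm_le_bound _ (by positivity) (fun v => ?_)
  simp only [dotCLM_apply, dotProduct]
  calc ‖∑ i, w i * v i‖ ≤ ∑ i, ‖w i * v i‖ := norm_sum_le _ _
    _ ≤ ∑ _i : Fin n, ‖w‖ * ‖v‖ := by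
        refine Finset.sum_le_sum (fun i _ => ?_)
        rw [norm_mul]
        exact mul_le_mul (norm_le_pi_norm w i) (norm_le_pi_norm v i) (norm_nonneg _) (norm_nonneg _)
    _ = n * ‖w‖ * ‖v‖ := by
        rw [Finset.sum_const, Finset.card_univ, Fintype.card_fin, nsmul_eq_mul, mul_assoc]

lemma sq_norm_le_dotProduct (w : Fin n → ℝ) : ‖w‖ ^ 2 ≤ w ⬝ᵥ w := by
  have h1 : ‖w‖ ≤ Real.sqrt (w ⬝ᵥ w) := by
    refine pi_norm_le_iff_of_nonneg (Real.sqrt_nonneg _) |>.2 (fun i => ?_)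
    rw [Real.norm_eq_abs]
    refine Real.abs_le_sqrt ?_
    unfold dotProduct
    have := Finset.single_le_sum (f := fun j => w j * w j)
      (fun j _ => mul_self_nonneg (w j)) (Finset.mem_univ i)
    have this : w i * w i ≤ ∑ j, w j * w j := this
    nlinarith [this]
  have h2 : (0:ℝ) ≤ w ⬝ᵥ w := by
    unfold dotProduct
    exact Finset.sum_nonneg (fun j _ => mul_self_nonneg (w j))
  calc ‖w‖ ^ 2 ≤ Real.sqrt (w ⬝ᵥ w) ^ 2 := by
        exact pow_le_pow_left₀ (norm_nonneg _) h1 2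
    _ = w ⬝ᵥ w := Real.sq_sqrt h2

/-- quadratic form lower bound for a positive definite matrix -/
lemma posDef_quadratic_lower_bound {A : Matrix (Fin n) (Fin n) ℝ} (hA : A.PosDef) :
    ∃ c : ℝ, 0 < c ∧ ∀ y : Fin n → ℝ, c * ‖y‖ ^ 2 ≤ y ⬝ᵥ (A *ᵥ y) := by
  obtain ⟨S, hSsem, hSS⟩ : ∃ S : Matrix (Fin n) (Fin n) ℝ, S.PosSemidef ∧ S * S = A := by
    open scoped MatrixOrder in
    exact ⟨CFC.sqrt A, (CFC.sqrt_nonneg A).posSemidef, CFC.sqrt_mul_sqrt_self A hA.posSemidef.nonneg⟩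
  have hSt : Sᵀ = S := by
    have := hSsem.1
    rwa [Matrix.IsHermitian, conjTranspose_eq_transpose_of_trivial] at this
  have hdet : S.det ≠ 0 := by
    intro h
    have : A.det = 0 := by rw [← hSS, det_mul, h, mul_zero]
    exact (ne_of_gt hA.det_pos) this
  have key : ∀ y : Fin n → ℝ, y ⬝ᵥ (A *ᵥ y) = (S *ᵥ y) ⬝ᵥ (S *ᵥ y) := by
    intro y
    rw [← hSS, ← Matrix.mulVec_mulVec, Matrix.dotProduct_mulVec, ← Matrix.mulVec_transpose, hSt]
  set K := ‖LinearMap.toContinuousLinearMap (Matrix.mulVecLin S⁻¹)‖ with hK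
  have hKnn : 0 ≤ K := norm_nonneg _
  set K' := max K 1 with hK'
  have hK'pos : (0:ℝ) < K' := lt_of_lt_of_le one_pos (le_max_right _ _)
  refine ⟨(K' ^ 2)⁻¹, by positivity, fun y => ?_⟩
  have hy : ‖y‖ ≤ K' * ‖S *ᵥ y‖ := by
    have : y = S⁻¹ *ᵥ (S *ᵥ y) := by
      rw [Matrix.mulVec_mulVec, Matrix.nonsing_inv_mul _ (isUnit_iff_ne_zero.2 hdet),
        Matrix.one_mulVec]
    calc ‖y‖ = ‖LinearMap.toContinuousLinearMap (Matrix.mulVecLin S⁻¹) (S *ᵥ y)‖ := by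
          conv_lhs => rw [this]
          rfl
      _ ≤ K * ‖S *ᵥ y‖ := ContinuousLinearMap.le_opNorm _ _
      _ ≤ K' * ‖S *ᵥ y‖ := by
          exact mul_le_mul_of_nonneg_right (le_max_left _ _) (norm_nonneg _)
  have h2 : ‖y‖ ^ 2 ≤ K' ^ 2 * ‖S *ᵥ y‖ ^ 2 := by nlinarith [norm_nonneg (S *ᵥ y), norm_nonneg y]
  have h3 : ‖S *ᵥ y‖ ^ 2 ≤ y ⬝ᵥ (A *ᵥ y) := (key y) ▸ sq_norm_le_dotProduct (S *ᵥ y)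
  rw [inv_mul_le_iff₀ (by positivity)]
  nlinarith [h2, h3]

lemma integrable_exp_neg_sq_norm {c : ℝ} (hc : 0 < c) :
    Integrable (fun y : Fin n → ℝ => Real.exp (-c * ‖y‖ ^ 2)) := by
  have hprod : Integrable (fun y : Fin n → ℝ => ∏ i, Real.exp (-(c / n) * (y i) ^ 2)) := by
    refine Integrable.fintype_prod (f := fun _ (t : ℝ) => Real.exp (-(c / n) * t ^ 2)) ?_
    intro i
    have hn : (0:ℝ) < n := by
      have : 0 < n := i.pos
      exact_mod_cast this
    exact integrable_exp_neg_mul_sq (by positivity)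
  refine hprod.mono' ?_ ?_
  · exact (Continuous.aestronglyMeasurable (by continuity))
  · refine Filter.Eventually.of_forall (fun y => ?_)
    rw [Real.norm_eq_abs, abs_of_pos (Real.exp_pos _), ← Real.exp_sum]
    refine Real.exp_le_exp.2 ?_
    rcases Nat.eq_zero_or_pos n with h0 | hn
    · subst h0; simp; positivity
    · have hsum : ∑ i, (y i) ^ 2 ≤ (n : ℝ) * ‖y‖ ^ 2 := by
        calc ∑ i, (y i) ^ 2 ≤ ∑ _i : Fin n, ‖y‖ ^ 2 := by
              refine Finset.sum_le_sum (fun i _ => ?_)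
              have := norm_le_pi_norm y i
              rw [Real.norm_eq_abs] at this
              nlinarith [abs_nonneg (y i), norm_nonneg y, sq_abs (y i)]
          _ = (n : ℝ) * ‖y‖ ^ 2 := by
              rw [Finset.sum_const, Finset.card_univ, Fintype.card_fin, nsmul_eq_mul]
      have hn' : (0:ℝ) < n := by exact_mod_cast hn
      have : (c / n) * ∑ i, (y i) ^ 2 ≤ c * ‖y‖ ^ 2 := by
        rw [div_mul_eq_mul_div, div_le_iff₀ hn']
        calc c * ∑ i, (y i) ^ 2 ≤ c * ((n:ℝ) * ‖y‖ ^ 2) :=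
              mul_le_mul_of_nonneg_left hsum hc.le
          _ = c * ‖y‖ ^ 2 * n := by ring
      calc -c * ‖y‖ ^ 2 = -(c * ‖y‖ ^ 2) := by ring
        _ ≤ -((c / n) * ∑ i, (y i) ^ 2) := neg_le_neg this
        _ = ∑ i, -(c / n) * (y i) ^ 2 := by rw [Finset.mul_sum]; simp

lemma one_add_le_exp_sq {c t : ℝ} (hc : 0 < c) (ht : 0 ≤ t) :
    t + 1 ≤ (1 + 4 / c) * Real.exp ((c / 2) * t ^ 2) := by
  have he1 : (1:ℝ) ≤ Real.exp ((c / 2) * t ^ 2) := by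
    rw [← Real.exp_zero]; exact Real.exp_le_exp.2 (by positivity)
  rcases le_or_gt t (4 / c) with h | h
  · nlinarith [he1, div_nonneg (by norm_num : (0:ℝ) ≤ 4) hc.le]
  · have h4 : 4 < c * t := by rwa [div_lt_iff₀ hc, mul_comm] at h
    have h5 : 4 * t ≤ c * t ^ 2 := by nlinarith [mul_le_mul_of_nonneg_left h4.le ht]
    have hu : (c / 2) * t ^ 2 ≥ t := by nlinarith [h5, ht]
    have := Real.add_one_le_exp ((c / 2) * t ^ 2)
    nlinarith [div_nonneg (by norm_num : (0:ℝ) ≤ 4) hc.le, Real.exp_pos ((c / 2) * t ^ 2)]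

lemma integrable_linear_gauss {c : ℝ} (hc : 0 < c) :
    Integrable (fun y : Fin n → ℝ => (‖y‖ + 1) * Real.exp (-c * ‖y‖ ^ 2)) := by
  refine (((integrable_exp_neg_sq_norm (half_pos hc)).const_mul (1 + 4 / c)).mono'
    ((Continuous.aestronglyMeasurable (by continuity))) ?_)
  refine Filter.Eventually.of_forall (fun y => ?_)
  have h1 := one_add_le_exp_sq hc (norm_nonneg y)
  have h2 : Real.exp ((c/2) * ‖y‖^2) * Real.exp (-c * ‖y‖^2) = Real.exp (-(c/2) * ‖y‖^2) := by
    rw [← Real.exp_add]; ring_nf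
  rw [Real.norm_eq_abs, abs_of_nonneg (by positivity)]
  calc (‖y‖ + 1) * Real.exp (-c * ‖y‖ ^ 2)
      ≤ ((1 + 4 / c) * Real.exp ((c / 2) * ‖y‖ ^ 2)) * Real.exp (-c * ‖y‖ ^ 2) := by
        exact mul_le_mul_of_nonneg_right h1 (Real.exp_pos _).le
    _ = (1 + 4 / c) * Real.exp (-(c / 2) * ‖y‖ ^ 2) := by rw [mul_assoc, h2]

lemma hasFDerivAt_quadratic (A : Matrix (Fin n) (Fin n) ℝ) (y0 : Fin n → ℝ) :
    HasFDerivAt (fun y : Fin n → ℝ => y ⬝ᵥ (A *ᵥ y))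
      (dotCLM (A *ᵥ y0 + Aᵀ *ᵥ y0)) y0 := by
  have key : HasFDerivAt (fun y : Fin n → ℝ => ∑ i, y i * (A *ᵥ y) i)
      (∑ i, (y0 i • ((ContinuousLinearMap.proj i).comp
          (LinearMap.toContinuousLinearMap (Matrix.mulVecLin A)))
        + (A *ᵥ y0) i • (ContinuousLinearMap.proj (R := ℝ) (φ := fun _ : Fin n => ℝ) i))) y0 := by
    refine HasFDerivAt.fun_sum (fun i _ => ?_)
    have h1 : HasFDerivAt (fun y : Fin n → ℝ => y i)
        (ContinuousLinearMap.proj (R := ℝ) (φ := fun _ : Fin n => ℝ) i) y0 :=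
      hasFDerivAt_apply i y0
    have h2 : HasFDerivAt (fun y : Fin n → ℝ => (A *ᵥ y) i)
        ((ContinuousLinearMap.proj i).comp
          (LinearMap.toContinuousLinearMap (Matrix.mulVecLin A))) y0 :=
      ((ContinuousLinearMap.proj i).comp
        (LinearMap.toContinuousLinearMap (Matrix.mulVecLin A))).hasFDerivAt
    exact h1.mul h2
  refine key.congr_fderiv ?_
  ext v
  simp only [ContinuousLinearMap.coe_sum', Finset.sum_apply, ContinuousLinearMap.add_apply,
    ContinuousLinearMap.smul_apply, ContinuousLinearMap.coe_comp', Function.comp_apply,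
    ContinuousLinearMap.proj_apply, LinearMap.coe_toContinuousLinearMap', Matrix.mulVecLin_apply,
    dotCLM_apply, smul_eq_mul]
  rw [Finset.sum_add_distrib, add_dotProduct]
  have e1 : ∑ i, y0 i * (A *ᵥ v) i = (Aᵀ *ᵥ y0) ⬝ᵥ v := by
    show y0 ⬝ᵥ (A *ᵥ v) = _
    rw [Matrix.dotProduct_mulVec, Matrix.mulVec_transpose]
  have e2 : ∑ i, (A *ᵥ y0) i * v i = (A *ᵥ y0) ⬝ᵥ v := rfl
  rw [e1, e2]
  ring

lemma transpose_inv_eq {P : Matrix (Fin n) (Fin n) ℝ} (hP : P.PosDef) : (P⁻¹)ᵀ = P⁻¹ := by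
  have := hP.inv.1
  rwa [Matrix.IsHermitian, conjTranspose_eq_transpose_of_trivial] at this

lemma hasFDerivAt_gaussianDensity {P : Matrix (Fin n) (Fin n) ℝ} (hP : P.PosDef)
    (x μ0 : Fin n → ℝ) :
    HasFDerivAt (fun μ => gaussianDensity μ P x)
      (gaussianDensity μ0 P x • dotCLM (P⁻¹ *ᵥ (x - μ0))) μ0 := by
  set d : ℝ := (Real.sqrt ((2 * Real.pi) ^ n * P.det))⁻¹ with hd
  have h1 : HasFDerivAt (fun μ : Fin n → ℝ => x - μ)
      (-(ContinuousLinearMap.id ℝ (Fin n → ℝ))) μ0 := (hasFDerivAt_id μ0).const_sub x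
  have h2 := (hasFDerivAt_quadratic P⁻¹ (x - μ0)).comp μ0 h1
  have h3 := h2.const_mul (-(1/2) : ℝ)
  have h4 := h3.exp
  have h5 := h4.const_mul d
  refine h5.congr_fderiv ?_
  ext v
  simp only [ContinuousLinearMap.smul_apply, dotCLM_apply, smul_eq_mul,
    ContinuousLinearMap.coe_comp', Function.comp_apply, ContinuousLinearMap.neg_apply,
    ContinuousLinearMap.coe_id', id_eq, gaussianDensity, transpose_inv_eq hP]
  rw [dotProduct_neg, add_dotProduct]
  ring

lemma continuous_gaussianDensity (mu : Fin n → ℝ) (P : Matrix (Fin n) (Fin n) ℝ) :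
    Continuous (gaussianDensity mu P) := by
  unfold gaussianDensity
  refine continuous_const.mul (Real.continuous_exp.comp (continuous_const.mul ?_))
  have hq : Continuous (fun y : Fin n → ℝ => y ⬝ᵥ (P⁻¹ *ᵥ y)) :=
    continuous_iff_continuousAt.2 fun y => (hasFDerivAt_quadratic P⁻¹ y).continuousAt
  exact hq.comp (continuous_id.sub continuous_const)

lemma gaussianDensity_shift (mu : Fin n → ℝ) (P : Matrix (Fin n) (Fin n) ℝ) (x : Fin n → ℝ) :
    gaussianDensity mu P x = gaussianDensity 0 P (x - mu) := by
  simp [gaussianDensity]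

lemma gaussianDensity_even (P : Matrix (Fin n) (Fin n) ℝ) (y : Fin n → ℝ) :
    gaussianDensity 0 P (-y) = gaussianDensity 0 P y := by
  simp only [gaussianDensity, sub_zero, Matrix.mulVec_neg, dotProduct_neg,
    neg_dotProduct, neg_neg]

end Auxiliary

set_option maxHeartbeats 1000000 in
/-- the Jacobian of the Gaussian-smoothed function `x̄(m) = ∫ f(x) N(x; m, P) dx`
equals the SLR gain `Ψᵀ P⁻¹` evaluated at `m`. -/
theorem jacobian_of_gaussian_smoothed_eq_slr_gain
    {n m : ℕ} (P : Matrix (Fin n) (Fin n) ℝ) (hP : P.PosDef)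
    (f : (Fin n → ℝ) → (Fin m → ℝ)) (hfmeas : Measurable f)
    (hfbdd : ∃ C : ℝ, ∀ x, ‖f x‖ ≤ C)
    (xbar : (Fin n → ℝ) → (Fin m → ℝ))
    (hxbar : ∀ (mu : Fin n → ℝ) (j : Fin m),
      xbar mu j = ∫ x, f x j * gaussianDensity mu P x)
    (Ψt : (Fin n → ℝ) → Matrix (Fin m) (Fin n) ℝ)
    (hΨt : ∀ (mu : Fin n → ℝ) (j : Fin m) (i : Fin n),
      Ψt mu j i = ∫ x, (f x j - xbar mu j) * (x i - mu i) * gaussianDensity mu P x) :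
    ∀ mu : Fin n → ℝ,
      HasFDerivAt xbar
        (LinearMap.toContinuousLinearMap (Matrix.mulVecLin (Ψt mu * P⁻¹))) mu := by
  intro mu
  obtain ⟨C, hC⟩ := hfbdd
  have hC0 : 0 ≤ C := le_trans (norm_nonneg (f 0)) (hC 0)
  obtain ⟨c, hc, hquad⟩ := posDef_quadratic_lower_bound hP.inv
  set d : ℝ := (Real.sqrt ((2 * Real.pi) ^ n * P.det))⁻¹ with hd
  have hd0 : 0 < d := by
    rw [hd]
    have hdet := hP.det_pos
    have hpi := Real.pi_pos
    positivity
  have hgpos : ∀ (μ x : Fin n → ℝ), 0 < gaussianDensity μ P x := fun μ x =>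
    mul_pos hd0 (Real.exp_pos _)
  have hgle : ∀ (μ x : Fin n → ℝ),
      gaussianDensity μ P x ≤ d * Real.exp (-(c/2) * ‖x - μ‖^2) := by
    intro μ x
    unfold gaussianDensity
    refine mul_le_mul_of_nonneg_left (Real.exp_le_exp.2 ?_) hd0.le
    have := hquad (x - μ)
    nlinarith [this]
  set KA := ‖LinearMap.toContinuousLinearMap (Matrix.mulVecLin P⁻¹)‖ with hKA
  have hKA0 : 0 ≤ KA := norm_nonneg _
  have hKAle : ∀ y : Fin n → ℝ, ‖P⁻¹ *ᵥ y‖ ≤ KA * ‖y‖ := fun y =>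
    (LinearMap.toContinuousLinearMap (Matrix.mulVecLin P⁻¹)).le_opNorm y
  set F : (Fin n → ℝ) → (Fin n → ℝ) → (Fin m → ℝ) :=
    fun μ x => gaussianDensity μ P x • f x with hF
  set F' : (Fin n → ℝ) → (Fin n → ℝ) → ((Fin n → ℝ) →L[ℝ] (Fin m → ℝ)) :=
    fun μ x => (gaussianDensity μ P x • dotCLM (P⁻¹ *ᵥ (x - μ))).smulRight (f x) with hF'
  have hgmeas : ∀ μ : Fin n → ℝ, Measurable (gaussianDensity μ P) := fun μ =>
    (continuous_gaussianDensity μ P).measurable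
  have hFmeas : ∀ μ : Fin n → ℝ, AEStronglyMeasurable (F μ) volume := fun μ =>
    ((hgmeas μ).smul hfmeas).aestronglyMeasurable
  have hFint : ∀ μ : Fin n → ℝ, Integrable (F μ) volume := by
    intro μ
    refine Integrable.mono'
      (((integrable_exp_neg_sq_norm (half_pos hc)).comp_sub_right μ).const_mul (C * d))
      (hFmeas μ) (Filter.Eventually.of_forall fun x => ?_)
    rw [hF]
    rw [norm_smul, Real.norm_eq_abs, abs_of_pos (hgpos μ x)]
    calc gaussianDensity μ P x * ‖f x‖
        ≤ (d * Real.exp (-(c/2) * ‖x - μ‖^2)) * C :=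
          mul_le_mul (hgle μ x) (hC x) (norm_nonneg _) (by positivity)
      _ = C * d * Real.exp (-(c/2) * ‖x - μ‖^2) := by ring
  have hdcont : Continuous (fun w : Fin n → ℝ => dotCLM w) := by
    let L : (Fin n → ℝ) →ₗ[ℝ] ((Fin n → ℝ) →L[ℝ] ℝ) :=
      { toFun := dotCLM
        map_add' := fun a b => by ext v; simp [add_dotProduct]
        map_smul' := fun r a => by ext v; simp [smul_dotProduct] }
    exact L.continuous_of_finiteDimensional
  have hF'meas : ∀ μ : Fin n → ℝ, AEStronglyMeasurable (F' μ) volume := by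
    intro μ
    have hcont : Continuous (fun x : Fin n → ℝ =>
        gaussianDensity μ P x • dotCLM (P⁻¹ *ᵥ (x - μ))) := by
      refine (continuous_gaussianDensity μ P).smul (hdcont.comp ?_)
      exact (LinearMap.toContinuousLinearMap (Matrix.mulVecLin P⁻¹)).continuous.comp
        (continuous_id.sub continuous_const)
    have hΦ : Continuous (fun p : ((Fin n → ℝ) →L[ℝ] ℝ) × (Fin m → ℝ) => p.1.smulRight p.2) :=
      isBoundedBilinearMap_smulRight.continuous
    exact (hΦ.measurable.comp (hcont.measurable.prodMk hfmeas)).aestronglyMeasurable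
  set bound : (Fin n → ℝ) → ℝ :=
    fun x => (C * ((n : ℝ) * (KA * (d * Real.exp (c/2))))) *
      ((‖x - mu‖ + 1) * Real.exp (-(c/4) * ‖x - mu‖^2)) with hbd
  have hbound_int : Integrable bound volume :=
    ((integrable_linear_gauss (by positivity : (0:ℝ) < c/4)).comp_sub_right mu).const_mul _
  have h_bound : ∀ x : Fin n → ℝ, ∀ μ ∈ Metric.ball mu 1, ‖F' μ x‖ ≤ bound x := by
    intro x μ hμ
    have hd1 : ‖μ - mu‖ < 1 := by
      have := Metric.mem_ball.1 hμ
      rwa [dist_eq_norm] at this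
    have hs1 : ‖x - mu‖ - 1 ≤ ‖x - μ‖ := by
      have h := norm_add_le (x - μ) (μ - mu)
      have hx : x - μ + (μ - mu) = x - mu := by abel
      rw [hx] at h
      linarith
    have hs2 : ‖x - μ‖ ≤ ‖x - mu‖ + 1 := by
      have h := norm_add_le (x - mu) (mu - μ)
      have hx : x - mu + (mu - μ) = x - μ := by abel
      rw [hx] at h
      have : ‖mu - μ‖ = ‖μ - mu‖ := norm_sub_rev _ _
      linarith
    have hexp : Real.exp (-(c/2) * ‖x - μ‖^2)
        ≤ Real.exp (c/2) * Real.exp (-(c/4) * ‖x - mu‖^2) := by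
      rw [← Real.exp_add]
      refine Real.exp_le_exp.2 ?_
      rcases le_or_gt ‖x - mu‖ 1 with h1 | h1
      · have ht2 : ‖x - mu‖^2 ≤ 1 := by nlinarith [norm_nonneg (x - mu)]
        have key1 : c * ‖x - mu‖^2 ≤ c * 1 := mul_le_mul_of_nonneg_left ht2 hc.le
        have key2 : (0:ℝ) ≤ c * ‖x - μ‖^2 := by positivity
        nlinarith [key1, key2]
      · have hsq : (‖x - mu‖ - 1)^2 ≤ ‖x - μ‖^2 := by
          refine pow_le_pow_left₀ (by linarith) hs1 2
        have key1 : c * (‖x - mu‖ - 1)^2 ≤ c * ‖x - μ‖^2 :=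
          mul_le_mul_of_nonneg_left hsq hc.le
        have key2 : (0:ℝ) ≤ c * (‖x - mu‖ - 2)^2 := mul_nonneg hc.le (sq_nonneg _)
        nlinarith [key1, key2]
    rw [hF']
    rw [ContinuousLinearMap.norm_smulRight_apply, norm_smul, Real.norm_eq_abs,
      abs_of_pos (hgpos μ x)]
    have h1 : ‖dotCLM (P⁻¹ *ᵥ (x - μ))‖ ≤ (n : ℝ) * (KA * ‖x - μ‖) := by
      refine le_trans (dotCLM_norm_le _) ?_
      exact mul_le_mul_of_nonneg_left (hKAle _) (by positivity)
    calc gaussianDensity μ P x * ‖dotCLM (P⁻¹ *ᵥ (x - μ))‖ * ‖f x‖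
        ≤ (d * Real.exp (-(c/2) * ‖x - μ‖^2)) * ((n : ℝ) * (KA * ‖x - μ‖)) * C := by
          refine mul_le_mul (mul_le_mul (hgle μ x) h1 (norm_nonneg _) (by positivity))
            (hC x) (norm_nonneg _) (by positivity)
      _ ≤ (d * (Real.exp (c/2) * Real.exp (-(c/4) * ‖x - mu‖^2))) *
            ((n : ℝ) * (KA * (‖x - mu‖ + 1))) * C := by
          refine mul_le_mul_of_nonneg_right (mul_le_mul ?_ ?_ (by positivity) (by positivity)) hC0
          · exact mul_le_mul_of_nonneg_left hexp hd0.le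
          · refine mul_le_mul_of_nonneg_left (mul_le_mul_of_nonneg_left ?_ hKA0) (by positivity)
            exact hs2
      _ = bound x := by rw [hbd]; ring
  have h_diff : ∀ x : Fin n → ℝ, ∀ μ ∈ Metric.ball mu 1,
      HasFDerivAt (fun μ' => F μ' x) (F' μ x) μ := by
    intro x μ _
    exact (hasFDerivAt_gaussianDensity hP x μ).smul_const (f x)
  have key : HasFDerivAt (fun μ => ∫ x, F μ x) (∫ x, F' mu x) mu := by
    refine hasFDerivAt_integral_of_dominated_of_fderiv_le (s := Metric.ball mu 1) (Metric.ball_mem_nhds mu one_pos)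
      (Filter.Eventually.of_forall fun μ => hFmeas μ) (hFint mu) (hF'meas mu)
      (Filter.Eventually.of_forall fun x μ hμ => h_bound x μ hμ) hbound_int
      (Filter.Eventually.of_forall fun x μ hμ => h_diff x μ hμ)
  have hfun : (fun μ => ∫ x, F μ x) = xbar := by
    funext μ
    funext j
    rw [hxbar μ j]
    calc (∫ x, F μ x) j
        = ∫ x, (F μ x) j :=
          ((ContinuousLinearMap.proj (R := ℝ) (φ := fun _ : Fin m => ℝ) j).integral_comp_comm
            (hFint μ)).symm
      _ = ∫ x, f x j * gaussianDensity μ P x := by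
          congr 1
          funext x
          simp [hF, mul_comm]
  have hF'int : Integrable (F' mu) volume :=
    Integrable.mono' hbound_int (hF'meas mu)
      (Filter.Eventually.of_forall fun x => h_bound x mu (Metric.mem_ball_self one_pos))
  have hzero : ∀ k : Fin n, ∫ x, (x k - mu k) * gaussianDensity mu P x = 0 := by
    intro k
    have h1 : ∫ x, (x k - mu k) * gaussianDensity mu P x
        = ∫ y, y k * gaussianDensity 0 P y := by
      rw [← integral_sub_right_eq_self (fun y => y k * gaussianDensity 0 P y) mu]
      congr 1
      funext x
      rw [gaussianDensity_shift mu P x]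
      simp [Pi.sub_apply]
    have h2 : ∫ y, y k * gaussianDensity 0 P y = - ∫ y, y k * gaussianDensity 0 P y := by
      conv_lhs => rw [← integral_neg_eq_self (fun y => y k * gaussianDensity 0 P y) volume]
      rw [← integral_neg]
      congr 1
      funext y
      simp [gaussianDensity_even, Pi.neg_apply]
    rw [h1]
    linarith [h2]
  have hGlin : Integrable
      (fun x : Fin n → ℝ => (‖x - mu‖ + 1) * Real.exp (-(c/2) * ‖x - mu‖^2)) volume :=
    (integrable_linear_gauss (half_pos hc)).comp_sub_right mu
  have hmgk : ∀ k : Fin n, Measurable (fun x : Fin n → ℝ =>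
      (x k - mu k) * gaussianDensity mu P x) := by
    intro k
    exact (((continuous_apply k).sub continuous_const).measurable).mul (hgmeas mu)
  have hboundgk : ∀ (k : Fin n) (x : Fin n → ℝ),
      |(x k - mu k) * gaussianDensity mu P x|
        ≤ d * ((‖x - mu‖ + 1) * Real.exp (-(c/2) * ‖x - mu‖^2)) := by
    intro k x
    rw [abs_mul, abs_of_pos (hgpos mu x)]
    have e1 : |x k - mu k| ≤ ‖x - mu‖ := by
      have := norm_le_pi_norm (x - mu) k
      rwa [Pi.sub_apply, Real.norm_eq_abs] at this
    calc |x k - mu k| * gaussianDensity mu P x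
        ≤ ‖x - mu‖ * (d * Real.exp (-(c/2) * ‖x - mu‖^2)) :=
          mul_le_mul e1 (hgle mu x) (hgpos mu x).le (norm_nonneg _)
      _ ≤ (‖x - mu‖ + 1) * (d * Real.exp (-(c/2) * ‖x - mu‖^2)) := by
          refine mul_le_mul_of_nonneg_right (by linarith) (by positivity)
      _ = d * ((‖x - mu‖ + 1) * Real.exp (-(c/2) * ‖x - mu‖^2)) := by ring
  have hint2 : ∀ k : Fin n,
      Integrable (fun x => (x k - mu k) * gaussianDensity mu P x) volume := by
    intro k
    refine Integrable.mono' (hGlin.const_mul d) ((hmgk k).aestronglyMeasurable)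
      (Filter.Eventually.of_forall fun x => ?_)
    rw [Real.norm_eq_abs]
    exact hboundgk k x
  have hint1 : ∀ (j : Fin m) (k : Fin n),
      Integrable (fun x => f x j * ((x k - mu k) * gaussianDensity mu P x)) volume := by
    intro j k
    refine Integrable.mono' (hGlin.const_mul (C * d))
      ((((measurable_pi_apply j).comp hfmeas).mul (hmgk k)).aestronglyMeasurable)
      (Filter.Eventually.of_forall fun x => ?_)
    rw [Real.norm_eq_abs, abs_mul]
    have e2 : |f x j| ≤ C := by
      have := norm_le_pi_norm (f x) j
      rw [Real.norm_eq_abs] at this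
      exact le_trans this (hC x)
    calc |f x j| * |(x k - mu k) * gaussianDensity mu P x|
        ≤ C * (d * ((‖x - mu‖ + 1) * Real.exp (-(c/2) * ‖x - mu‖^2))) :=
          mul_le_mul e2 (hboundgk k x) (abs_nonneg _) hC0
      _ = C * d * ((‖x - mu‖ + 1) * Real.exp (-(c/2) * ‖x - mu‖^2)) := by ring
  have hΨ' : ∀ (j : Fin m) (k : Fin n),
      Ψt mu j k = ∫ x, f x j * ((x k - mu k) * gaussianDensity mu P x) := by
    intro j k
    rw [hΨt mu j k]
    have heq : (fun x => (f x j - xbar mu j) * (x k - mu k) * gaussianDensity mu P x)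
        = fun x => f x j * ((x k - mu k) * gaussianDensity mu P x)
            - xbar mu j * ((x k - mu k) * gaussianDensity mu P x) := by
      funext x
      ring
    rw [heq, integral_sub (hint1 j k) ((hint2 k).const_mul _), integral_const_mul,
      hzero k, mul_zero, sub_zero]
  have hdotsym : ∀ (x v : Fin n → ℝ), (P⁻¹ *ᵥ (x - mu)) ⬝ᵥ v = (x - mu) ⬝ᵥ (P⁻¹ *ᵥ v) := by
    intro x v
    rw [Matrix.dotProduct_mulVec, ← Matrix.mulVec_transpose, transpose_inv_eq hP,
      dotProduct_comm]
  have hkey2 : (∫ x, F' mu x)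
      = LinearMap.toContinuousLinearMap (Matrix.mulVecLin (Ψt mu * P⁻¹)) := by
    refine ContinuousLinearMap.ext fun v => ?_
    funext j
    set w := P⁻¹ *ᵥ v with hw
    have hL : ((∫ x, F' mu x) v) j
        = ∫ x, gaussianDensity mu P x * ((x - mu) ⬝ᵥ w) * f x j := by
      have hΛ := (((ContinuousLinearMap.proj (R := ℝ) (φ := fun _ : Fin m => ℝ) j).comp
          (ContinuousLinearMap.apply ℝ (Fin m → ℝ) v)).integral_comp_comm hF'int).symm
      calc ((∫ x, F' mu x) v) j = _ := hΛ
        _ = ∫ x, gaussianDensity mu P x * ((x - mu) ⬝ᵥ w) * f x j := by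
          congr 1
          funext x
          simp only [hF', ContinuousLinearMap.coe_comp', Function.comp_apply,
            ContinuousLinearMap.apply_apply, ContinuousLinearMap.smulRight_apply,
            ContinuousLinearMap.smul_apply, dotCLM_apply, ContinuousLinearMap.proj_apply,
            Pi.smul_apply, smul_eq_mul]
          rw [hdotsym x v]
          try ring
    have hR : (LinearMap.toContinuousLinearMap (Matrix.mulVecLin (Ψt mu * P⁻¹)) v) j
        = ∑ k, Ψt mu j k * w k := by
      show ((Ψt mu * P⁻¹) *ᵥ v) j = _
      rw [← Matrix.mulVec_mulVec]
      rfl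
    have hsum : ∑ k, Ψt mu j k * w k
        = ∫ x, gaussianDensity mu P x * ((x - mu) ⬝ᵥ w) * f x j := by
      calc ∑ k, Ψt mu j k * w k
          = ∑ k, (∫ x, f x j * ((x k - mu k) * gaussianDensity mu P x)) * w k :=
            Finset.sum_congr rfl fun k _ => by rw [hΨ' j k]
        _ = ∑ k, ∫ x, f x j * ((x k - mu k) * gaussianDensity mu P x) * w k :=
            Finset.sum_congr rfl fun k _ => (integral_mul_const _ _).symm
        _ = ∫ x, ∑ k, f x j * ((x k - mu k) * gaussianDensity mu P x) * w k :=
            (integral_finset_sum _ (fun k _ => (hint1 j k).mul_const _)).symm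
        _ = ∫ x, gaussianDensity mu P x * ((x - mu) ⬝ᵥ w) * f x j := by
            congr 1
            funext x
            rw [dotProduct, Finset.mul_sum, Finset.sum_mul]
            refine Finset.sum_congr rfl fun k _ => ?_
            simp only [Pi.sub_apply]
            ring
    rw [hL, hR, hsum]
  rw [hfun, hkey2] at key
  exact key
end

section
/- Consider a Gaussian prior x ~ N(m, P) on ℝ^n with P positive definite and an affine measurement y = H x + c + r with r ~ N(0, R), R positive definite. Let (m₁, P₁) be the result of applying two sequential Kalman updates with pseudo-measurement splitting: first update (m, P) with measurement y (matrix H, offset c, noise R), then update the result with the pseudo-measurement x̂ (identity matrix, noise λ⁻¹S). Then m₁ is the unique minimizer of x ↦ ½(x−m)ᵀP⁻¹(x−m) + ½(y − Hx − c)ᵀR⁻¹(y − Hx − c) + (λ/2)(x − x̂)ᵀS⁻¹(x − x̂). -/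
open Matrix

private lemma quad_expand' {n : ℕ} (M : Matrix (Fin n) (Fin n) ℝ) (hM : Mᵀ = M)
    (u e : Fin n → ℝ) :
    (u + e) ⬝ᵥ (M *ᵥ (u + e)) =
      u ⬝ᵥ (M *ᵥ u) + 2 * (e ⬝ᵥ (M *ᵥ u)) + e ⬝ᵥ (M *ᵥ e) := by
  have hsym : u ⬝ᵥ (M *ᵥ e) = e ⬝ᵥ (M *ᵥ u) := by
    rw [dotProduct_mulVec, ← mulVec_transpose, hM, dotProduct_comm]
  simp only [mulVec_add, dotProduct_add, add_dotProduct, hsym]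
  ring

private lemma mulVec_dot' {d n : ℕ} (H : Matrix (Fin d) (Fin n) ℝ) (v : Fin n → ℝ)
    (w : Fin d → ℝ) : (H *ᵥ v) ⬝ᵥ w = v ⬝ᵥ (Hᵀ *ᵥ w) := by
  rw [dotProduct_comm, dotProduct_mulVec, ← mulVec_transpose, dotProduct_comm]

/-- sequential Kalman processing of an affine measurement followed by
the LM pseudo-measurement yields the mean that uniquely minimizes the combined
quadratic cost (prior + measurement + LM regularization). -/
theorem sequential_kalman_updates_minimize_cost
    {n d : ℕ} (m xhat : Fin n → ℝ)
    (P S : Matrix (Fin n) (Fin n) ℝ) (hP : P.PosDef) (hS : S.PosDef)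
    (lam : ℝ) (hlam : 0 < lam)
    (H : Matrix (Fin d) (Fin n) ℝ) (c y : Fin d → ℝ)
    (R : Matrix (Fin d) (Fin d) ℝ) (hR : R.PosDef)
    -- first (standard) Kalman update with measurement y = Hx + c + r
    (S0 : Matrix (Fin d) (Fin d) ℝ) (hS0 : S0 = H * P * Hᵀ + R)
    (K0 : Matrix (Fin n) (Fin d) ℝ) (hK0 : K0 = P * Hᵀ * S0⁻¹)
    (m0 : Fin n → ℝ) (hm0 : m0 = m + K0 *ᵥ (y - (H *ᵥ m + c)))
    (P0 : Matrix (Fin n) (Fin n) ℝ) (hP0 : P0 = P - K0 * S0 * K0ᵀ)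
    -- second (pseudo-measurement) Kalman update with x̂ = x + e, e ~ N(0, λ⁻¹S)
    (S1 : Matrix (Fin n) (Fin n) ℝ) (hS1 : S1 = P0 + lam⁻¹ • S)
    (K1 : Matrix (Fin n) (Fin n) ℝ) (hK1 : K1 = P0 * S1⁻¹)
    (m1 : Fin n → ℝ) (hm1 : m1 = m0 + K1 *ᵥ (xhat - m0))
    (cost : (Fin n → ℝ) → ℝ)
    (hcost : ∀ x, cost x =
      (1 / 2) * ((x - m) ⬝ᵥ (P⁻¹ *ᵥ (x - m))) +
        (1 / 2) * ((y - (H *ᵥ x + c)) ⬝ᵥ (R⁻¹ *ᵥ (y - (H *ᵥ x + c)))) +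
        (lam / 2) * ((x - xhat) ⬝ᵥ (S⁻¹ *ᵥ (x - xhat)))) :
    ∀ x : Fin n → ℝ, x ≠ m1 → cost m1 < cost x := by
  -- symmetry facts
  have hPt : Pᵀ = P := by
    rw [← conjTranspose_eq_transpose_of_trivial]; exact hP.isHermitian
  have hSt : Sᵀ = S := by
    rw [← conjTranspose_eq_transpose_of_trivial]; exact hS.isHermitian
  have hRt : Rᵀ = R := by
    rw [← conjTranspose_eq_transpose_of_trivial]; exact hR.isHermitian
  have hHPH : (H * P * Hᵀ).PosSemidef := by
    have := hP.posSemidef.mul_mul_conjTranspose_same H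
    rwa [conjTranspose_eq_transpose_of_trivial] at this
  have hS0pd : S0.PosDef := by
    rw [hS0]; exact Matrix.PosDef.posSemidef_add hHPH hR
  have hS0t : S0ᵀ = S0 := by
    rw [← conjTranspose_eq_transpose_of_trivial]; exact hS0pd.isHermitian
  have hPi : P⁻¹ * P = 1 := nonsing_inv_mul P (isUnit_iff_isUnit_det P |>.mp hP.isUnit)
  have hRi : R⁻¹ * R = 1 := nonsing_inv_mul R (isUnit_iff_isUnit_det R |>.mp hR.isUnit)
  have hSi : S⁻¹ * S = 1 := nonsing_inv_mul S (isUnit_iff_isUnit_det S |>.mp hS.isUnit)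
  have hS0i : S0 * S0⁻¹ = 1 := mul_nonsing_inv S0 (isUnit_iff_isUnit_det S0 |>.mp hS0pd.isUnit)
  set BB : Matrix (Fin n) (Fin n) ℝ := P⁻¹ + Hᵀ * R⁻¹ * H with hBB
  have hKT : K0ᵀ = S0⁻¹ * (H * P) := by
    rw [hK0, transpose_mul, transpose_mul, transpose_nonsing_inv, hS0t, transpose_transpose,
      hPt]
  have hBK0 : BB * K0 = Hᵀ * R⁻¹ := by
    calc BB * K0 = (P⁻¹ + Hᵀ * R⁻¹ * H) * (P * Hᵀ * S0⁻¹) := by rw [hK0, hBB]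
    _ = (P⁻¹ * P) * Hᵀ * S0⁻¹ + Hᵀ * R⁻¹ * (H * P * Hᵀ) * S0⁻¹ := by
        simp only [Matrix.add_mul, Matrix.mul_assoc]
    _ = Hᵀ * (R⁻¹ * R) * S0⁻¹ + Hᵀ * R⁻¹ * (H * P * Hᵀ) * S0⁻¹ := by
        rw [hPi, hRi, Matrix.one_mul, Matrix.mul_one]
    _ = Hᵀ * R⁻¹ * ((H * P * Hᵀ + R) * S0⁻¹) := by
        simp only [Matrix.add_mul, Matrix.mul_add, Matrix.mul_assoc]
        abel
    _ = Hᵀ * R⁻¹ := by rw [← hS0, hS0i, Matrix.mul_one]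
  have hBP0 : BB * P0 = 1 := by
    have step1 : BB * P0 = BB * P - (BB * K0) * (S0 * K0ᵀ) := by
      rw [hP0]; simp only [Matrix.mul_sub, Matrix.mul_assoc]
    calc BB * P0 = BB * P - (BB * K0) * (S0 * K0ᵀ) := step1
    _ = BB * P - Hᵀ * R⁻¹ * (S0 * (S0⁻¹ * (H * P))) := by rw [hBK0, hKT]
    _ = BB * P - Hᵀ * R⁻¹ * (H * P) := by
        rw [← Matrix.mul_assoc S0, hS0i, Matrix.one_mul]
    _ = (P⁻¹ * P) + Hᵀ * R⁻¹ * (H * P) - Hᵀ * R⁻¹ * (H * P) := by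
        rw [hBB]; simp only [Matrix.add_mul, Matrix.mul_assoc]
    _ = 1 := by rw [hPi]; abel
  have hBpd : BB.PosDef := by
    have h2 : (Hᵀ * R⁻¹ * H).PosSemidef := by
      have := hR.inv.posSemidef.conjTranspose_mul_mul_same H
      rwa [conjTranspose_eq_transpose_of_trivial] at this
    exact hP.inv.add_posSemidef h2
  have hP0eq : BB⁻¹ = P0 := inv_eq_right_inv hBP0
  have hP0pd : P0.PosDef := hP0eq ▸ hBpd.inv
  have hSpd' : (lam⁻¹ • S).PosDef := by
    constructor
    · rw [IsHermitian, conjTranspose_smul, hS.isHermitian.eq]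
      simp
    · intro x hx
      exact (hS.smul (inv_pos.mpr hlam)).2 hx
  have hS1pd : S1.PosDef := by rw [hS1]; exact hP0pd.add_posSemidef hSpd'.posSemidef
  have hS1i : S1 * S1⁻¹ = 1 := mul_nonsing_inv S1 (isUnit_iff_isUnit_det S1 |>.mp hS1pd.isUnit)
  have hAK1 : (BB + lam • S⁻¹) * K1 = lam • S⁻¹ := by
    have key : (BB + lam • S⁻¹) * P0 = lam • (S⁻¹ * S1) := by
      rw [Matrix.add_mul, hBP0, Matrix.smul_mul, hS1, Matrix.mul_add, smul_add,
        Matrix.mul_smul, hSi, smul_smul, mul_inv_cancel₀ hlam.ne', one_smul, add_comm]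
    rw [hK1, ← Matrix.mul_assoc, key, Matrix.smul_mul, Matrix.mul_assoc, hS1i, Matrix.mul_one]
  have hBm0 : BB *ᵥ m0 = P⁻¹ *ᵥ m + Hᵀ *ᵥ (R⁻¹ *ᵥ (y - c)) := by
    have h1 : BB *ᵥ m0 = BB *ᵥ m + (Hᵀ * R⁻¹) *ᵥ (y - (H *ᵥ m + c)) := by
      rw [hm0, mulVec_add, mulVec_mulVec, hBK0]
    rw [h1, hBB]
    simp only [add_mulVec, ← mulVec_mulVec, mulVec_sub, mulVec_add]
    abel
  have hAm1 : (BB + lam • S⁻¹) *ᵥ m1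
      = P⁻¹ *ᵥ m + Hᵀ *ᵥ (R⁻¹ *ᵥ (y - c)) + lam • (S⁻¹ *ᵥ xhat) := by
    rw [hm1, mulVec_add, mulVec_mulVec, hAK1]
    simp only [add_mulVec, smul_mulVec, mulVec_sub, smul_sub, hBm0]
    abel
  rw [hBB] at hAm1
  -- the gradient of the cost vanishes at m1
  have hg : P⁻¹ *ᵥ (m1 - m) - Hᵀ *ᵥ (R⁻¹ *ᵥ (y - (H *ᵥ m1 + c)))
      + lam • (S⁻¹ *ᵥ (m1 - xhat)) = 0 := by
    have key : P⁻¹ *ᵥ (m1 - m) - Hᵀ *ᵥ (R⁻¹ *ᵥ (y - (H *ᵥ m1 + c)))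
        + lam • (S⁻¹ *ᵥ (m1 - xhat))
        = (P⁻¹ + Hᵀ * R⁻¹ * H + lam • S⁻¹) *ᵥ m1
          - (P⁻¹ *ᵥ m + Hᵀ *ᵥ (R⁻¹ *ᵥ (y - c)) + lam • (S⁻¹ *ᵥ xhat)) := by
      simp only [add_mulVec, smul_mulVec, ← mulVec_mulVec, mulVec_sub, mulVec_add,
        smul_sub]
      module
    rw [key, hAm1, sub_self]
  -- symmetry of the inverses
  have hPit : P⁻¹ᵀ = P⁻¹ := by rw [transpose_nonsing_inv, hPt]
  have hRit : R⁻¹ᵀ = R⁻¹ := by rw [transpose_nonsing_inv, hRt]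
  have hSit : S⁻¹ᵀ = S⁻¹ := by rw [transpose_nonsing_inv, hSt]
  -- main argument
  intro x hx
  set dx : Fin n → ℝ := x - m1 with hdx
  have hdne : dx ≠ 0 := sub_ne_zero.mpr hx
  have hxd : x = m1 + dx := by rw [hdx]; abel
  have e1 : x - m = (m1 - m) + dx := by rw [hxd]; abel
  have e3 : x - xhat = (m1 - xhat) + dx := by rw [hxd]; abel
  have e2 : y - (H *ᵥ x + c) = (y - (H *ᵥ m1 + c)) + (-(H *ᵥ dx)) := by
    rw [hxd, mulVec_add]; abel
  -- expand the cost at x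
  have hcx : cost x = cost m1
      + (dx ⬝ᵥ (P⁻¹ *ᵥ (m1 - m)) - (H *ᵥ dx) ⬝ᵥ (R⁻¹ *ᵥ (y - (H *ᵥ m1 + c)))
          + lam * (dx ⬝ᵥ (S⁻¹ *ᵥ (m1 - xhat))))
      + ((1 / 2) * (dx ⬝ᵥ (P⁻¹ *ᵥ dx))
          + (1 / 2) * ((H *ᵥ dx) ⬝ᵥ (R⁻¹ *ᵥ (H *ᵥ dx)))
          + (lam / 2) * (dx ⬝ᵥ (S⁻¹ *ᵥ dx))) := by
    rw [hcost x, hcost m1, e1, e2, e3,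
      quad_expand' P⁻¹ hPit (m1 - m) dx,
      quad_expand' S⁻¹ hSit (m1 - xhat) dx,
      quad_expand' R⁻¹ hRit (y - (H *ᵥ m1 + c)) (-(H *ᵥ dx))]
    simp only [neg_dotProduct, dotProduct_neg, mulVec_neg, neg_neg]
    ring
  -- the linear term vanishes
  have hlin : dx ⬝ᵥ (P⁻¹ *ᵥ (m1 - m)) - (H *ᵥ dx) ⬝ᵥ (R⁻¹ *ᵥ (y - (H *ᵥ m1 + c)))
      + lam * (dx ⬝ᵥ (S⁻¹ *ᵥ (m1 - xhat))) = 0 := by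
    have h := congrArg (fun w => dx ⬝ᵥ w) hg
    simpa [dotProduct_add, dotProduct_sub, dotProduct_smul, mulVec_dot', dotProduct_zero]
      using h
  -- positivity of the quadratic remainder
  have hq1 : 0 < dx ⬝ᵥ (P⁻¹ *ᵥ dx) := by
    have := hP.inv.dotProduct_mulVec_pos hdne; simpa using this
  have hq2 : 0 ≤ (H *ᵥ dx) ⬝ᵥ (R⁻¹ *ᵥ (H *ᵥ dx)) := by
    have := hR.inv.posSemidef.dotProduct_mulVec_nonneg (H *ᵥ dx); simpa using this
  have hq3 : 0 ≤ dx ⬝ᵥ (S⁻¹ *ᵥ dx) := by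
    have := hS.inv.posSemidef.dotProduct_mulVec_nonneg dx; simpa using this
  have h3 : 0 ≤ (lam / 2) * (dx ⬝ᵥ (S⁻¹ *ᵥ dx)) :=
    mul_nonneg (by linarith) hq3
  rw [hcx, hlin]
  linarith
end
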